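/- Let t ∈ [0,1) and N ∈ (1/2)ℤ. For real l ≥ max(|N|, 1), set u_l := ([l+N]·[l−N]·[2l])/(q·[2l+1]·[l]²) · (1 − t + q^{−2N}·[2l]^{−2}·[l]²·(t − 1 + q^{2N})²)/(1 − t) − 1. Then u_l ≤ C_N·q^{2l} for all such l, where C_N := (q^N − q^{−N}(1−t))² / ((1−q²)²·(1−t)). -/

import Mathlib

noncomputable section

namespace Podles

/-- The `q`-number `[x] = (q^x - q^(-x))/(q - q⁻¹)`. -/
def qn (q x : ℝ) : ℝ := (q ^ x - q ^ (-x)) / (q - q⁻¹)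

private lemma sub_inv_eq' {x : ℝ} (hx : x ≠ 0) : x - x⁻¹ = (x + 1) * (x - 1) / x := by
  field_simp
  ring

private lemma sub_inv_neg_of_lt_one {x : ℝ} (h0 : 0 < x) (h1 : x < 1) : x - x⁻¹ < 0 := by
  have h2 : 1 < x⁻¹ := (one_lt_inv₀ h0).mpr h1
  linarith

set_option maxHeartbeats 1000000 in
/-- the upper bound `u_l ≤ C_N q^{2l}`. -/
theorem statement4 (q t : ℝ) (hq0 : 0 < q) (hq1 : q < 1) (ht0 : 0 ≤ t) (ht1 : t < 1)
    (N : ℝ) (hN : ∃ n : ℤ, N = (n : ℝ) / 2) :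
    ∀ l : ℝ, max |N| 1 ≤ l →
      qn q (l + N) * qn q (l - N) * qn q (2 * l) / (q * qn q (2 * l + 1) * qn q l ^ 2) *
          ((1 - t + q ^ (-(2 * N)) * ((qn q (2 * l))⁻¹) ^ 2 * qn q l ^ 2 *
              (t - 1 + q ^ (2 * N)) ^ 2) / (1 - t)) - 1 ≤
        (q ^ N - q ^ (-N) * (1 - t)) ^ 2 / ((1 - q ^ 2) ^ 2 * (1 - t)) * q ^ (2 * l) := by
  intro l hl
  have hNl : N ≤ l := le_trans (le_abs_self N) (le_trans (le_max_left _ _) hl)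
  have hNl' : -N ≤ l := le_trans (neg_le_abs N) (le_trans (le_max_left _ _) hl)
  have h1l : 1 ≤ l := le_trans (le_max_right _ _) hl
  -- rewrite all real powers in terms of q^l and q^N
  have E1 : q ^ (l + N) = q ^ l * q ^ N := Real.rpow_add hq0 l N
  have E2 : q ^ (-(l + N)) = (q ^ l * q ^ N)⁻¹ := by
    rw [Real.rpow_neg hq0.le, E1]
  have E3 : q ^ (l - N) = q ^ l * (q ^ N)⁻¹ := by
    rw [Real.rpow_sub hq0, div_eq_mul_inv]
  have E4 : q ^ (-(l - N)) = (q ^ l * (q ^ N)⁻¹)⁻¹ := by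
    rw [Real.rpow_neg hq0.le, E3]
  have E5 : q ^ (2 * l) = q ^ l * q ^ l := by
    rw [show (2 : ℝ) * l = l + l by ring, Real.rpow_add hq0]
  have E6 : q ^ (-(2 * l)) = (q ^ l * q ^ l)⁻¹ := by
    rw [Real.rpow_neg hq0.le, E5]
  have E7 : q ^ (2 * l + 1) = q ^ l * q ^ l * q := by
    rw [Real.rpow_add hq0, E5, Real.rpow_one]
  have E8 : q ^ (-(2 * l + 1)) = (q ^ l * q ^ l * q)⁻¹ := by
    rw [Real.rpow_neg hq0.le, E7]
  have E9 : q ^ (2 * N) = q ^ N * q ^ N := by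
    rw [show (2 : ℝ) * N = N + N by ring, Real.rpow_add hq0]
  have E10 : q ^ (-(2 * N)) = (q ^ N * q ^ N)⁻¹ := by
    rw [Real.rpow_neg hq0.le, E9]
  have E11 : q ^ (-N) = (q ^ N)⁻¹ := Real.rpow_neg hq0.le N
  have E12 : q ^ (-l) = (q ^ l)⁻¹ := Real.rpow_neg hq0.le l
  have ha0 : 0 < q ^ l := Real.rpow_pos_of_pos hq0 l
  have hb0 : 0 < q ^ N := Real.rpow_pos_of_pos hq0 N
  have hab : q ^ l ≤ q ^ N := Real.rpow_le_rpow_of_exponent_ge hq0 hq1.le hNl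
  have hab1 : q ^ l * q ^ N ≤ 1 := by
    rw [← Real.rpow_add hq0]
    exact Real.rpow_le_one hq0.le hq1.le (by linarith)
  have haq : q ^ l ≤ q := by
    calc q ^ l ≤ q ^ (1 : ℝ) := Real.rpow_le_rpow_of_exponent_ge hq0 hq1.le h1l
    _ = q := Real.rpow_one q
  simp only [qn, E1, E2, E3, E4, E5, E6, E7, E8, E9, E10, E11, E12]
  set a := q ^ l with ha_def
  set b := q ^ N with hb_def
  clear_value a b
  clear E1 E2 E3 E4 E5 E6 E7 E8 E9 E10 E11 E12 ha_def hb_def hl hNl hNl' h1l hN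
  -- basic facts
  have ha1 : a < 1 := lt_of_le_of_lt haq hq1
  have hs : 0 < 1 - t := by linarith
  have hq2 : q ^ 2 < 1 := by nlinarith
  have haa1 : a * a < 1 := by nlinarith
  have haaq1 : a * a * q < 1 := by nlinarith
  have hd : q - q⁻¹ < 0 := sub_inv_neg_of_lt_one hq0 hq1
  have hx1 : a - a⁻¹ < 0 := sub_inv_neg_of_lt_one ha0 ha1
  have hx2 : a * a - (a * a)⁻¹ < 0 :=
    sub_inv_neg_of_lt_one (mul_pos ha0 ha0) haa1
  have hx3 : a * a * q - (a * a * q)⁻¹ < 0 :=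
    sub_inv_neg_of_lt_one (mul_pos (mul_pos ha0 ha0) hq0) haaq1
  have hA2Q : (a * a) ^ 2 * q ^ 2 < 1 := by
    nlinarith [pow_pos (mul_pos ha0 ha0) 2, sq_nonneg q, mul_pos ha0 ha0]
  have hq2ne : (1 : ℝ) - q ^ 2 ≠ 0 := ne_of_gt (by nlinarith)
  have hA1ne : a * a - 1 ≠ 0 := ne_of_lt (by nlinarith)
  have hAp1 : (0 : ℝ) < a * a + 1 := by positivity
  have hA2Qne : (1 : ℝ) - (a * a) ^ 2 * q ^ 2 ≠ 0 := ne_of_gt (by nlinarith [hA2Q])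
  have nq1 : q - 1 ≠ 0 := sub_ne_zero.mpr hq1.ne
  have nq2 : q + 1 ≠ 0 := (by positivity : (0:ℝ) < q + 1).ne'
  have na1 : a - 1 ≠ 0 := sub_ne_zero.mpr ha1.ne
  have na2 : a + 1 ≠ 0 := (by positivity : (0:ℝ) < a + 1).ne'
  have naa1 : a * a - 1 ≠ 0 := sub_ne_zero.mpr haa1.ne
  have naaq1 : a * a * q - 1 ≠ 0 := sub_ne_zero.mpr haaq1.ne
  have naaq2 : a * a * q + 1 ≠ 0 := (by positivity : (0:ℝ) < a * a * q + 1).ne'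
  -- the key inequality, in algebraic form
  have hDp : (0 : ℝ) < b * b * (1 - (a * a) ^ 2 * q ^ 2) * (a * a - 1) ^ 2 := by
    have h2 : (0 : ℝ) < (a * a - 1) ^ 2 := by positivity
    have h3 : (0 : ℝ) < 1 - (a * a) ^ 2 * q ^ 2 := by nlinarith
    positivity
  have hNp : (0 : ℝ) ≤ (1 - a * a * (b * b)) * (b * b - a * a) * (1 - (a * a) ^ 2) := by
    have h1 : (0 : ℝ) ≤ 1 - a * a * (b * b) := by
      nlinarith [mul_nonneg (mul_pos ha0 hb0).le (sub_nonneg.mpr hab1)]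
    have h2 : (0 : ℝ) ≤ b * b - a * a := by nlinarith
    have h3 : (0 : ℝ) ≤ 1 - (a * a) ^ 2 := by nlinarith
    positivity
  have hF1 : (1 - a * a * (b * b)) * (b * b - a * a) * (1 - (a * a) ^ 2) /
      (b * b * (1 - (a * a) ^ 2 * q ^ 2) * (a * a - 1) ^ 2) ≤ 1 := by
    rw [div_le_one hDp]
    have hid : b * b * (1 - (a * a) ^ 2 * q ^ 2) * (a * a - 1) ^ 2 -
        (1 - a * a * (b * b)) * (b * b - a * a) * (1 - (a * a) ^ 2) =
        (a * a) ^ 2 * (b * b) * (1 - q ^ 2) * (a * a - 1) ^ 2 +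
          (a * a) * (1 - (a * a) ^ 2) * (b * b - 1) ^ 2 := by ring
    have ht1' : (0 : ℝ) ≤ (a * a) ^ 2 * (b * b) * (1 - q ^ 2) * (a * a - 1) ^ 2 := by
      have : (0 : ℝ) ≤ 1 - q ^ 2 := by linarith
      positivity
    have ht2' : (0 : ℝ) ≤ (a * a) * (1 - (a * a) ^ 2) * (b * b - 1) ^ 2 := by
      have : (0 : ℝ) ≤ 1 - (a * a) ^ 2 := by nlinarith
      positivity
    linarith
  have hF2 : (1 - a * a * (b * b)) * (b * b - a * a) * (1 - (a * a) ^ 2) /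
      (b * b * (1 - (a * a) ^ 2 * q ^ 2) * (a * a - 1) ^ 2) ≤
      (a * a + 1) ^ 2 / (1 - q ^ 2) ^ 2 := by
    rw [div_le_div_iff₀ hDp (by positivity)]
    have hg : (0 : ℝ) ≤ 2 * (a * a) - 4 * (a * a) * q ^ 2 + 2 * (a * a) * (q ^ 2) ^ 2 +
        2 * q ^ 2 - (q ^ 2) ^ 2 - 2 * (a * a) ^ 2 + (a * a) ^ 2 * q ^ 2 +
        (a * a) ^ 4 * q ^ 2 - (a * a) ^ 2 * (q ^ 2) ^ 2 := by
      have hgid : 2 * (a * a) - 4 * (a * a) * q ^ 2 + 2 * (a * a) * (q ^ 2) ^ 2 +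
          2 * q ^ 2 - (q ^ 2) ^ 2 - 2 * (a * a) ^ 2 + (a * a) ^ 2 * q ^ 2 +
          (a * a) ^ 4 * q ^ 2 - (a * a) ^ 2 * (q ^ 2) ^ 2 =
          2 * (a * a) * (1 - q ^ 2) ^ 2 +
            (q ^ 2 - (a * a) ^ 2) * (2 - q ^ 2 - (a * a) ^ 2 * q ^ 2) := by ring
      have hp1 : (0 : ℝ) ≤ 2 * (a * a) * (1 - q ^ 2) ^ 2 := by positivity
      have hA2q2 : (a * a) ^ 2 ≤ q ^ 2 := by nlinarith
      have hp2 : (0 : ℝ) ≤ (q ^ 2 - (a * a) ^ 2) * (2 - q ^ 2 - (a * a) ^ 2 * q ^ 2) := by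
        apply mul_nonneg (by linarith)
        nlinarith
      linarith
    have hP2 : (0 : ℝ) ≤ (b * b) * (2 * (a * a) - 4 * (a * a) * q ^ 2 +
        2 * (a * a) * (q ^ 2) ^ 2 + 2 * q ^ 2 - (q ^ 2) ^ 2 - 2 * (a * a) ^ 2 +
        (a * a) ^ 2 * q ^ 2 + (a * a) ^ 4 * q ^ 2 - (a * a) ^ 2 * (q ^ 2) ^ 2) +
        (a * a) * (1 - q ^ 2) ^ 2 * (b * b - 1) ^ 2 := by
      have h1 : (0 : ℝ) ≤ (a * a) * (1 - q ^ 2) ^ 2 * (b * b - 1) ^ 2 := by positivity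
      have h2 : (0 : ℝ) ≤ (b * b) * (2 * (a * a) - 4 * (a * a) * q ^ 2 +
          2 * (a * a) * (q ^ 2) ^ 2 + 2 * q ^ 2 - (q ^ 2) ^ 2 - 2 * (a * a) ^ 2 +
          (a * a) ^ 2 * q ^ 2 + (a * a) ^ 4 * q ^ 2 - (a * a) ^ 2 * (q ^ 2) ^ 2) :=
        mul_nonneg (by positivity) hg
      linarith
    have hA2le : (0 : ℝ) ≤ 1 - (a * a) ^ 2 := by nlinarith
    nlinarith [mul_nonneg hA2le hP2]
  have hKv0 : (0 : ℝ) ≤ (b * b - (1 - t)) ^ 2 / ((1 - t) * (b * b)) := by positivity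
  have hW0 : (0 : ℝ) ≤ (b * b - (1 - t)) ^ 2 / ((1 - t) * (b * b)) * (a * a) /
      ((a * a + 1) ^ 2) := by positivity
  have hMain : (1 - a * a * (b * b)) * (b * b - a * a) * (1 - (a * a) ^ 2) /
      (b * b * (1 - (a * a) ^ 2 * q ^ 2) * (a * a - 1) ^ 2) *
      (1 + (b * b - (1 - t)) ^ 2 / ((1 - t) * (b * b)) * (a * a) / ((a * a + 1) ^ 2)) - 1 ≤
      (b * b - (1 - t)) ^ 2 / ((1 - t) * (b * b)) * (a * a) / ((1 - q ^ 2) ^ 2) := by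
    have step1 : (1 - a * a * (b * b)) * (b * b - a * a) * (1 - (a * a) ^ 2) /
        (b * b * (1 - (a * a) ^ 2 * q ^ 2) * (a * a - 1) ^ 2) *
        (1 + (b * b - (1 - t)) ^ 2 / ((1 - t) * (b * b)) * (a * a) / ((a * a + 1) ^ 2)) - 1 =
        ((1 - a * a * (b * b)) * (b * b - a * a) * (1 - (a * a) ^ 2) /
          (b * b * (1 - (a * a) ^ 2 * q ^ 2) * (a * a - 1) ^ 2) - 1) +
        (1 - a * a * (b * b)) * (b * b - a * a) * (1 - (a * a) ^ 2) /
          (b * b * (1 - (a * a) ^ 2 * q ^ 2) * (a * a - 1) ^ 2) *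
          ((b * b - (1 - t)) ^ 2 / ((1 - t) * (b * b)) * (a * a) / ((a * a + 1) ^ 2)) := by
      ring
    rw [step1]
    have step2 : (1 - a * a * (b * b)) * (b * b - a * a) * (1 - (a * a) ^ 2) /
        (b * b * (1 - (a * a) ^ 2 * q ^ 2) * (a * a - 1) ^ 2) *
        ((b * b - (1 - t)) ^ 2 / ((1 - t) * (b * b)) * (a * a) / ((a * a + 1) ^ 2)) ≤
        (a * a + 1) ^ 2 / (1 - q ^ 2) ^ 2 *
        ((b * b - (1 - t)) ^ 2 / ((1 - t) * (b * b)) * (a * a) / ((a * a + 1) ^ 2)) :=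
      mul_le_mul_of_nonneg_right hF2 hW0
    have step3 : (a * a + 1) ^ 2 / (1 - q ^ 2) ^ 2 *
        ((b * b - (1 - t)) ^ 2 / ((1 - t) * (b * b)) * (a * a) / ((a * a + 1) ^ 2)) =
        (b * b - (1 - t)) ^ 2 / ((1 - t) * (b * b)) * (a * a) / ((1 - q ^ 2) ^ 2) := by
      field_simp
    linarith
  have c1 : (a * b - (a * b)⁻¹) / (q - q⁻¹) * ((a * b⁻¹ - (a * b⁻¹)⁻¹) / (q - q⁻¹)) *
      ((a * a - (a * a)⁻¹) / (q - q⁻¹)) /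
      (q * ((a * a * q - (a * a * q)⁻¹) / (q - q⁻¹)) * ((a - a⁻¹) / (q - q⁻¹)) ^ 2) =
      (1 - a * a * (b * b)) * (b * b - a * a) * (1 - (a * a) ^ 2) /
      (b * b * (1 - (a * a) ^ 2 * q ^ 2) * (a * a - 1) ^ 2) := by
    rw [sub_inv_eq' (mul_ne_zero ha0.ne' hb0.ne'),
      sub_inv_eq' (mul_ne_zero ha0.ne' (inv_ne_zero hb0.ne')),
      sub_inv_eq' (mul_ne_zero ha0.ne' ha0.ne'),
      sub_inv_eq' (mul_ne_zero (mul_ne_zero ha0.ne' ha0.ne') hq0.ne'),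
      sub_inv_eq' ha0.ne', sub_inv_eq' hq0.ne']
    rw [div_eq_div_iff (by simp [ha0.ne', hb0.ne', hq0.ne', nq1, nq2, na1, na2, naa1, naaq1, naaq2, hAp1.ne', pow_ne_zero]) (by simp [hb0.ne', hA2Qne, naa1])]
    field_simp
    ring
  have c2 : (1 - t +
      (b * b)⁻¹ * ((a * a - (a * a)⁻¹) / (q - q⁻¹))⁻¹ ^ 2 * ((a - a⁻¹) / (q - q⁻¹)) ^ 2 *
        (t - 1 + b * b) ^ 2) / (1 - t) =
      1 + (b * b - (1 - t)) ^ 2 / ((1 - t) * (b * b)) * (a * a) / ((a * a + 1) ^ 2) := by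
    rw [sub_inv_eq' (mul_ne_zero ha0.ne' ha0.ne'), sub_inv_eq' ha0.ne',
      sub_inv_eq' hq0.ne']
    have : a * a - 1 = (a + 1) * (a - 1) := by ring
    rw [this]
    field_simp
    ring
  have c3 : (b - b⁻¹ * (1 - t)) ^ 2 / ((1 - q ^ 2) ^ 2 * (1 - t)) * (a * a) =
      (b * b - (1 - t)) ^ 2 / ((1 - t) * (b * b)) * (a * a) / ((1 - q ^ 2) ^ 2) := by
    field_simp [hq2ne, hs.ne', hb0.ne']
  rw [c1, c2, c3]
  exact hMain

end Podles
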